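/- Let t ∈ ℤ. Let P be the ℂ-vector space with basis {p_k}_{k∈ℤ} and define linear endomorphisms E, F, H of P by E(p_k) = (−t + 3/2 + k)·p_{k+1}, F(p_k) = (−k − 1/2)·p_{k−1}, H(p_k) = (−t + 2 + 2k)·p_k. Then: (a) [H,E] = 2E, [H,F] = −2F, [E,F] = H; (b) for every t ∈ ℤ, P has no ℂ-subspace invariant under all of E, F, H other than 0 and P. Thus P is the Harish-Chandra module of the irreducible principal series representation of SL(2,ℝ), realized as the global sections of the standard Harish-Chandra sheaf attached to the nontrivial K-homogeneous connection on the open K-orbit. -/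

import Mathlib

/-- For any t ∈ ℤ, on the ℂ-vector space P with basis {p_k}_{k∈ℤ}
with E(p_k) = (−t+3/2+k)·p_{k+1}, F(p_k) = (−k−1/2)·p_{k−1},
H(p_k) = (−t+2+2k)·p_k: (a) the sl₂ relations hold; (b) P has no invariant
subspace other than 0 and P.  This is the Harish-Chandra module of the
irreducible principal series of SL(2,ℝ). -/
theorem irreducible_principal_series (t : ℤ)
    (E F H : (ℤ →₀ ℂ) →ₗ[ℂ] (ℤ →₀ ℂ))
    (p : ℤ → ℤ →₀ ℂ) (hp : ∀ k, p k = Finsupp.single k 1)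
    (hE : ∀ k : ℤ, E (p k) = (-(t : ℂ) + 3 / 2 + k) • p (k + 1))
    (hF : ∀ k : ℤ, F (p k) = (-(k : ℂ) - 1 / 2) • p (k - 1))
    (hH : ∀ k : ℤ, H (p k) = (-(t : ℂ) + 2 + 2 * k) • p k) :
    -- (a) sl₂ relations
    (H ∘ₗ E - E ∘ₗ H = (2 : ℂ) • E ∧
     H ∘ₗ F - F ∘ₗ H = (-2 : ℂ) • F ∧
     E ∘ₗ F - F ∘ₗ E = H) ∧
    -- (b) irreducibility
    (∀ W : Submodule ℂ (ℤ →₀ ℂ),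
      (∀ v ∈ W, E v ∈ W) → (∀ v ∈ W, F v ∈ W) → (∀ v ∈ W, H v ∈ W) →
      W = ⊥ ∨ W = ⊤) := by
  have hsingle : ∀ (k : ℤ) (b : ℂ), Finsupp.single k b = b • p k := by
    intro k b; rw [hp, Finsupp.smul_single, smul_eq_mul, mul_one]
  constructor
  · refine ⟨?_, ?_, ?_⟩   <;>
    · apply Finsupp.lhom_ext
      intro a b
      simp only [LinearMap.sub_apply, LinearMap.comp_apply, LinearMap.smul_apply,
        hsingle, map_smul, hE, hF, hH, smul_smul]
      try simp only [show ∀ x:ℤ, x - 1 + 1 = x from fun x => by omega,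
        show ∀ x:ℤ, x + 1 - 1 = x from fun x => by omega]
      match_scalars <;> push_cast <;> ring
  · -- coordinate formula for H
    have hHc : ∀ (w : ℤ →₀ ℂ) (j : ℤ), H w j = (-(t : ℂ) + 2 + 2 * j) * w j := by
      intro w
      induction w using Finsupp.induction_linear with
      | zero => simp
      | add f g hf hg => intro j; simp [hf j, hg j]; ring
      | single k c =>
        intro j
        rw [hsingle, map_smul, hH, hp]
        by_cases h : j = k
        · subst h; simp [mul_comm]; ring
        · simp [Finsupp.single_apply, h, Ne.symm h]
    have hEne : ∀ k : ℤ, (-(t : ℂ) + 3 / 2 + k) ≠ 0 := by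
      intro k h
      have h2 : ((-2 * t + 3 + 2 * k : ℤ) : ℂ) = 0 := by push_cast; linear_combination 2 * h
      have := (Int.cast_eq_zero (α := ℂ)).mp h2
      omega
    have hFne : ∀ k : ℤ, (-(k : ℂ) - 1 / 2) ≠ 0 := by
      intro k h
      have h2 : ((-2 * k - 1 : ℤ) : ℂ) = 0 := by push_cast; linear_combination 2 * h
      have := (Int.cast_eq_zero (α := ℂ)).mp h2
      omega
    intro W hEW hFW hHW
    by_cases hbot : W = ⊥
    · exact Or.inl hbot
    right
    -- some nonzero element of W
    obtain ⟨w, hwW, hw0⟩ := Submodule.exists_mem_ne_zero_of_ne_bot hbot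
    -- extraction: some p k ∈ W
    have key : ∀ n : ℕ, ∀ w : ℤ →₀ ℂ, w ∈ W → w ≠ 0 → w.support.card ≤ n → ∃ k, p k ∈ W := by
      intro n
      induction n with
      | zero =>
        intro w hwW hw0 hc
        exact absurd (Finsupp.support_eq_empty.mp (Finset.card_eq_zero.mp (Nat.le_zero.mp hc))) hw0
      | succ n ih =>
        intro w hwW hw0 hc
        obtain ⟨k0, hk0⟩ := Finsupp.support_nonempty_iff.mpr hw0
        by_cases hone : w.support = {k0}
        · refine ⟨k0, ?_⟩
          have hwk0 : w k0 ≠ 0 := Finsupp.mem_support_iff.mp hk0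
          have hweq : w = (w k0) • p k0 := by
            rw [← hsingle]
            exact (Finsupp.support_eq_singleton.mp hone).2
          have h3 : (w k0)⁻¹ • w = p k0 := by
            nth_rewrite 2 [hweq]
            rw [smul_smul, inv_mul_cancel₀ hwk0, one_smul]
          have h2 := W.smul_mem (w k0)⁻¹ hwW
          rwa [h3] at h2
        · -- pick another k1 in support
          have : ∃ k1 ∈ w.support, k1 ≠ k0 := by
            by_contra hcon
            push_neg at hcon
            apply hone
            apply Finset.eq_singleton_iff_unique_mem.mpr ⟨hk0, fun x hx => hcon x hx⟩
          obtain ⟨k1, hk1, hk10⟩ := this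
          set v : ℤ →₀ ℂ := H w - (-(t : ℂ) + 2 + 2 * k1) • w with hv
          have hvW : v ∈ W := W.sub_mem (hHW w hwW) (W.smul_mem _ hwW)
          have hvc : ∀ j, v j = ((2 : ℂ) * j - 2 * k1) * w j := by
            intro j
            simp [hv, hHc w j]
            ring
          have hvk0 : v k0 ≠ 0 := by
            rw [hvc]
            apply mul_ne_zero
            · intro h
              have h2 : ((2 * k0 - 2 * k1 : ℤ) : ℂ) = 0 := by push_cast; linear_combination h
              have := (Int.cast_eq_zero (α := ℂ)).mp h2
              omega
            · exact Finsupp.mem_support_iff.mp hk0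
          have hv0 : v ≠ 0 := fun h => hvk0 (by rw [h]; simp)
          have hsub : v.support ⊆ w.support.erase k1 := by
            intro j hj
            rw [Finsupp.mem_support_iff, hvc] at hj
            rcases mul_ne_zero_iff.mp hj with ⟨h1, h2⟩
            refine Finset.mem_erase.mpr ⟨?_, Finsupp.mem_support_iff.mpr h2⟩
            intro h; subst h; exact h1 (by ring)
          have hcard : v.support.card ≤ n := by
            calc v.support.card ≤ (w.support.erase k1).card := Finset.card_le_card hsub
              _ = w.support.card - 1 := Finset.card_erase_of_mem hk1
              _ ≤ n := by omega
          exact ih v hvW hv0 hcard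
    obtain ⟨k, hkW⟩ := key w.support.card w hwW hw0 le_rfl
    -- propagate up and down
    have up : ∀ m : ℕ, p (k + m) ∈ W := by
      intro m
      induction m with
      | zero => simpa using hkW
      | succ m ih =>
        have := hEW _ ih
        rw [hE] at this
        have h2 := W.smul_mem (-(t : ℂ) + 3 / 2 + ((k + (m : ℤ) : ℤ) : ℂ))⁻¹ this
        rw [smul_smul, inv_mul_cancel₀ (hEne (k + m)), one_smul] at h2
        rwa [show (k : ℤ) + (m : ℤ) + 1 = k + ((m + 1 : ℕ) : ℤ) by push_cast; ring] at h2
    have down : ∀ m : ℕ, p (k - m) ∈ W := by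
      intro m
      induction m with
      | zero => simpa using hkW
      | succ m ih =>
        have := hFW _ ih
        rw [hF] at this
        have h2 := W.smul_mem (-(((k - (m : ℤ) : ℤ)) : ℂ) - 1 / 2)⁻¹ this
        rw [smul_smul, inv_mul_cancel₀ (hFne (k - m)), one_smul] at h2
        rwa [show (k : ℤ) - (m : ℤ) - 1 = k - ((m + 1 : ℕ) : ℤ) by push_cast; ring] at h2
    have hall : ∀ n : ℤ, p n ∈ W := by
      intro n
      rcases le_or_gt k n with h | h
      · have := up (n - k).toNat
        rwa [show k + ((n - k).toNat : ℤ) = n by omega] at this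
      · have := down (k - n).toNat
        rwa [show k - ((k - n).toNat : ℤ) = n by omega] at this
    rw [eq_top_iff]
    intro x _
    induction x using Finsupp.induction_linear with
    | zero => exact W.zero_mem
    | add f g hf hg => exact W.add_mem (hf trivial) (hg trivial)
    | single a b => rw [hsingle]; exact W.smul_mem _ (hall a)
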